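/- arXiv:2602.00478 — 2 statements merged into one kernel-verified Lean document; each statement's English description precedes it below -/
import Mathlib

section
/- The Smooth Sum-of-Minimum scalarization is supermodular: for finite nonempty sets X_U ⊆ X_W ⊆ 𝒳, any x' ∈ 𝒳 \ X_W, and μ > 0, g_μ^SSoM(X_U) - g_μ^SSoM(X_U ∪ {x'}) ≥ g_μ^SSoM(X_W) - g_μ^SSoM(X_W ∪ {x'}). -/
/-- Supermodularity of the Smooth Sum-of-Minimum scalarization: for finite nonempty
sets `XU ⊆ XW`, any `x' ∉ XW`, and `μ > 0`,
`g_μ^SSoM(XU) - g_μ^SSoM(XU ∪ {x'}) ≥ g_μ^SSoM(XW) - g_μ^SSoM(XW ∪ {x'})`, where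
`g_μ^SSoM(X) = -∑ m, μ·log (∑ x ∈ X, exp (-v m x / μ))`. -/
theorem ssom_supermodular {𝒳 : Type*} [DecidableEq 𝒳] (M : ℕ) (hM : 1 ≤ M)
    (v : Fin M → 𝒳 → ℝ) (μ : ℝ) (hμ : 0 < μ)
    (XU XW : Finset 𝒳) (hne : XU.Nonempty) (hsub : XU ⊆ XW) (x' : 𝒳) (hx' : x' ∉ XW) :
    (-(∑ m, μ * Real.log (∑ x ∈ XU, Real.exp (-v m x / μ))) -
        -(∑ m, μ * Real.log (∑ x ∈ insert x' XU, Real.exp (-v m x / μ)))) ≥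
      (-(∑ m, μ * Real.log (∑ x ∈ XW, Real.exp (-v m x / μ))) -
        -(∑ m, μ * Real.log (∑ x ∈ insert x' XW, Real.exp (-v m x / μ)))) := by
  have hx'U : x' ∉ XU := fun h => hx' (hsub h)
  simp only [Finset.sum_insert hx'U, Finset.sum_insert hx', ge_iff_le, sub_neg_eq_add,
    neg_add_eq_sub, ← Finset.sum_sub_distrib]
  apply Finset.sum_le_sum
  intro m _
  set e := Real.exp (-v m x' / μ) with he
  have hepos : 0 < e := Real.exp_pos _
  have ha : 0 < ∑ x ∈ XU, Real.exp (-v m x / μ) :=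
    Finset.sum_pos (fun x _ => Real.exp_pos _) hne
  have hab : (∑ x ∈ XU, Real.exp (-v m x / μ)) ≤ ∑ x ∈ XW, Real.exp (-v m x / μ) :=
    Finset.sum_le_sum_of_subset_of_nonneg hsub (fun x _ _ => (Real.exp_pos _).le)
  have hb : 0 < ∑ x ∈ XW, Real.exp (-v m x / μ) := lt_of_lt_of_le ha hab
  set a := ∑ x ∈ XU, Real.exp (-v m x / μ)
  set b := ∑ x ∈ XW, Real.exp (-v m x / μ)
  rw [← mul_sub, ← mul_sub, ← Real.log_div (by positivity) (ne_of_gt hb),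
    ← Real.log_div (by positivity) (ne_of_gt ha)]
  apply mul_le_mul_of_nonneg_left _ hμ.le
  apply Real.log_le_log (by positivity)
  rw [div_le_div_iff₀ hb ha]
  nlinarith
end

section
/- Every solution in a solution set minimizing the weighted Smooth Sum-of-Minimum scalarization with all strictly positive weights (λ_m > 0 for all m) is Pareto optimal: no x^(p) ∈ X* is dominated by any x̂ ∈ 𝒳 satisfying ṽ_m(x̂) ≤ ṽ_m(x^(p)) for all m with strict inequality for some m. -/
/-- Every solution in a solution set minimizing the weighted Smooth Sum-of-Minimum
scalarization with all strictly positive weights (`λ m > 0` for all `m`) is Pareto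
optimal: no `x p` is dominated by any `x̂ ∈ 𝒳` satisfying `v m x̂ ≤ v m (x p)` for
all `m` with strict inequality for some `m`. -/
theorem ssom_pareto {𝒳 : Type*} (M K : ℕ) (hM : 1 ≤ M) (hK : 1 ≤ K)
    (v : Fin M → 𝒳 → ℝ) (μ : ℝ) (hμ : 0 < μ) (lam : Fin M → ℝ) (hlam : ∀ m, 0 < lam m)
    (x : Fin K → 𝒳)
    (hmin : ∀ y : Fin K → 𝒳,
      -μ * ∑ m, lam m * Real.log (∑ k, Real.exp (-v m (x k) / μ)) ≤
        -μ * ∑ m, lam m * Real.log (∑ k, Real.exp (-v m (y k) / μ))) :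
    ∀ p : Fin K, ¬∃ xhat : 𝒳,
      (∀ m, v m xhat ≤ v m (x p)) ∧ (∃ m, v m xhat < v m (x p)) := by
  intro p ⟨xhat, hle, m0, hlt⟩
  set y : Fin K → 𝒳 := Function.update x p xhat with hy
  have hyk : ∀ k, y k = if k = p then xhat else x k := by
    intro k; by_cases h : k = p <;> simp [hy, Function.update, h]
  -- termwise comparison of exponential sums
  have hterm' : ∀ m k, Real.exp (-v m (x k) / μ) ≤ Real.exp (-v m (y k) / μ) := by
    intro m k
    rw [hyk]
    by_cases h : k = p
    · simp only [h, if_pos rfl]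
      exact Real.exp_le_exp.2 (div_le_div_of_nonneg_right (neg_le_neg (hle m)) hμ.le)
    · simp [h]
  have hS : ∀ m, (∑ k, Real.exp (-v m (x k) / μ)) ≤ ∑ k, Real.exp (-v m (y k) / μ) :=
    fun m => Finset.sum_le_sum fun k _ => hterm' m k
  have hSpos : ∀ m, 0 < ∑ k, Real.exp (-v m (x k) / μ) := by
    intro m
    apply Finset.sum_pos (fun k _ => Real.exp_pos _)
    exact ⟨⟨0, hK⟩, Finset.mem_univ _⟩
  have hSlt : (∑ k, Real.exp (-v m0 (x k) / μ)) < ∑ k, Real.exp (-v m0 (y k) / μ) := by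
    apply Finset.sum_lt_sum (fun k _ => hterm' m0 k) ⟨p, Finset.mem_univ _, ?_⟩
    rw [hyk]
    simp only [if_pos rfl]
    exact Real.exp_lt_exp.2 (div_lt_div_of_pos_right (neg_lt_neg hlt) hμ)
  -- compare the weighted log sums
  have hlog : (∑ m, lam m * Real.log (∑ k, Real.exp (-v m (x k) / μ))) <
      ∑ m, lam m * Real.log (∑ k, Real.exp (-v m (y k) / μ)) := by
    apply Finset.sum_lt_sum
    · intro m _
      exact mul_le_mul_of_nonneg_left
        (Real.log_le_log (hSpos m) (hS m)) (hlam m).le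
    · exact ⟨m0, Finset.mem_univ _,
        mul_lt_mul_of_pos_left (Real.log_lt_log (hSpos m0) hSlt) (hlam m0)⟩
  have h2 : -μ * (∑ m, lam m * Real.log (∑ k, Real.exp (-v m (y k) / μ))) <
      -μ * ∑ m, lam m * Real.log (∑ k, Real.exp (-v m (x k) / μ)) := by
    have := mul_lt_mul_of_pos_left hlog hμ
    linarith
  exact absurd (hmin y) (not_le.2 h2)
end
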